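/- For every ε > 0 there exists Q₀ such that for all real Q ≥ Q₀ and every finite set A of positive integers contained in [1, Q], the multiplicative energy satisfies E(A) ≤ |A|²·exp((2·log 2 + ε)·(log Q)/(log log Q)). -/

import Mathlib

open Finset Filter


lemma tau_pow_le (n k : ℕ) (hn : n ≠ 0) (hk : 1 ≤ k) :
    n.divisors.card ^ k ≤ (k + 1) ^ (k * 2 ^ k) * n := by
  have hprod : ∏ p ∈ n.primeFactors, p ^ n.factorization p = n := by
    simpa [Nat.support_factorization, Finsupp.prod] using
      Nat.factorization_prod_pow_eq_self hn
  rw [Nat.card_divisors hn, ← Finset.prod_pow]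
  have key : ∀ p ∈ n.primeFactors,
      (n.factorization p + 1) ^ k ≤
        (if p < 2 ^ k then (k + 1) ^ k else 1) * p ^ n.factorization p := by
    intro p hp
    have hp2 : 2 ≤ p := (Nat.prime_of_mem_primeFactors hp).two_le
    set a := n.factorization p with ha
    by_cases hcase : p < 2 ^ k
    · simp only [hcase, if_pos]
      have h1 : a + 1 ≤ (k + 1) * (a / k + 1) := by
        have := (Nat.div_lt_iff_lt_mul (show 0 < k by omega)).1
          (Nat.lt_succ_self (a / k))
        nlinarith [Nat.div_le_self a k]
      calc (a + 1) ^ k ≤ ((k + 1) * (a / k + 1)) ^ k := Nat.pow_le_pow_left h1 k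
        _ = (k + 1) ^ k * (a / k + 1) ^ k := mul_pow _ _ _
        _ ≤ (k + 1) ^ k * (2 ^ (a / k)) ^ k := by
            gcongr
            exact Nat.lt_two_pow_self (n := a / k)
        _ = (k + 1) ^ k * 2 ^ (a / k * k) := by rw [← pow_mul]
        _ ≤ (k + 1) ^ k * 2 ^ a := by
            gcongr
            · omega
            · exact Nat.div_mul_le_self a k
        _ ≤ (k + 1) ^ k * p ^ a := by gcongr
  
    · simp only [hcase, if_neg, not_false_iff, one_mul]
      push_neg at hcase
      calc (a + 1) ^ k ≤ (2 ^ a) ^ k := Nat.pow_le_pow_left (Nat.lt_two_pow_self (n := a)) k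
        _ = (2 ^ k) ^ a := by rw [← pow_mul, ← pow_mul, Nat.mul_comm]
        _ ≤ p ^ a := Nat.pow_le_pow_left hcase a
  calc ∏ p ∈ n.primeFactors, (n.factorization p + 1) ^ k
      ≤ ∏ p ∈ n.primeFactors,
          (if p < 2 ^ k then (k + 1) ^ k else 1) * p ^ n.factorization p :=
        Finset.prod_le_prod' key
    _ = (∏ p ∈ n.primeFactors, if p < 2 ^ k then (k + 1) ^ k else 1) *
          ∏ p ∈ n.primeFactors, p ^ n.factorization p := Finset.prod_mul_distrib
    _ ≤ (k + 1) ^ (k * 2 ^ k) * n := by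
        rw [hprod]
        gcongr
        rw [← Finset.prod_filter]
        rw [Finset.prod_const, ← pow_mul]
        apply Nat.pow_le_pow_right (by omega)
        have hsub : (n.primeFactors.filter (· < 2 ^ k)) ⊆ Finset.range (2 ^ k) := by
          intro p hp
          simp only [Finset.mem_filter] at hp
          exact Finset.mem_range.mpr hp.2
        have := Finset.card_le_card hsub
        rw [Finset.card_range] at this
        nlinarith

lemma pair_count_le (A : Finset ℕ) (n : ℕ) (hn : n ≠ 0) (hA : ∀ a ∈ A, 0 < a) :
    ((A ×ˢ A).filter fun y => n = y.1 * y.2).card ≤ n.divisors.card := by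
  apply Finset.card_le_card_of_injOn (fun y => y.1)
  · intro y hy
    simp only [Finset.mem_coe, Finset.mem_filter, Finset.mem_product] at hy
    exact Nat.mem_divisors.mpr ⟨⟨y.2, hy.2⟩, hn⟩
  · intro y hy z hz hyz
    simp only [Finset.coe_filter, Set.mem_setOf_eq, Finset.mem_product] at hy hz
    simp only at hyz
    have h1 : 0 < y.1 := hA y.1 hy.1.1
    have : y.1 * y.2 = z.1 * z.2 := by rw [← hy.2, ← hz.2]
    rw [hyz] at this
    have h2 : y.2 = z.2 := Nat.eq_of_mul_eq_mul_left (hyz ▸ h1) this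
    exact Prod.ext hyz h2

lemma energy_le (A : Finset ℕ) (hA : ∀ a ∈ A, 0 < a) :
    ((A ×ˢ A ×ˢ A ×ˢ A).filter
        (fun q => q.1 * q.2.1 = q.2.2.1 * q.2.2.2)).card ≤
      ∑ p ∈ A ×ˢ A, (p.1 * p.2).divisors.card := by
  rw [Finset.card_filter]
  simp only [Finset.sum_product]
  apply Finset.sum_le_sum
  intro a ha
  apply Finset.sum_le_sum
  intro b hb
  have hab : a * b ≠ 0 := by
    have := hA a ha; have := hA b hb; positivity
  calc (∑ c ∈ A, ∑ d ∈ A, if a * b = c * d then 1 else 0)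
      = ((A ×ˢ A).filter fun y => a * b = y.1 * y.2).card := by
        rw [Finset.card_filter, Finset.sum_product]
    _ ≤ (a * b).divisors.card := pair_count_le A (a * b) hab hA

lemma log_le_eventually (c : ℝ) (hc : 0 < c) :
    ∀ᶠ M : ℝ in atTop, Real.log M ≤ c * M := by
  filter_upwards [Real.isLittleO_log_id_atTop.def hc, eventually_ge_atTop (1 : ℝ)]
    with M h1 h2
  rwa [Real.norm_eq_abs, Real.norm_eq_abs, id,
    abs_of_nonneg (Real.log_nonneg h2), abs_of_nonneg (by linarith)] at h1

set_option maxHeartbeats 4000000 in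
lemma div_bound (ε : ℝ) (hε : 0 < ε) :
    ∀ᶠ Q : ℝ in atTop, ∀ n : ℕ, 0 < n → (n : ℝ) ≤ Q ^ 2 →
      (n.divisors.card : ℝ) ≤
        Real.exp ((2 * Real.log 2 + ε) *
          (Real.log Q / Real.log (Real.log Q))) := by
  have hl2 : 0 < Real.log 2 := Real.log_pos one_lt_two
  have hl2' : (0.6931471803 : ℝ) < Real.log 2 := Real.log_two_gt_d9
  set c₁ : ℝ := (ε / 2) / (4 * (2 * Real.log 2 + ε / 2)) with hc₁def
  have hc₁ : 0 < c₁ := by positivity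
  have hMfacts : ∀ᶠ M : ℝ in atTop,
      9 ≤ M ∧ Real.log M ≤ c₁ * M ∧ Real.log M ≤ M / 8 ∧ 4 / ε ≤ M := by
    filter_upwards [eventually_ge_atTop (9 : ℝ), log_le_eventually c₁ hc₁,
      log_le_eventually (1/8) (by norm_num), eventually_ge_atTop (4 / ε)]
      with M h1 h2 h3 h4
    exact ⟨h1, h2, by linarith, h4⟩
  have hMtend : Tendsto (fun Q : ℝ => Real.log (Real.log Q)) atTop atTop :=
    Real.tendsto_log_atTop.comp Real.tendsto_log_atTop
  filter_upwards [hMtend.eventually hMfacts, eventually_ge_atTop (2 : ℝ)]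
    with Q hMQ hQ2
  set L := Real.log Q with hLdef
  set M := Real.log L with hMdef
  obtain ⟨hM9, hMc₁, hM8, hMε⟩ := hMQ
  have hL0 : 0 < L := Real.log_pos (by linarith)
  have hM0 : 0 < M := by linarith
  have hexpM : Real.exp M = L := Real.exp_log hL0
  have hlogM0 : 0 ≤ Real.log M := Real.log_nonneg (by linarith)
  set x : ℝ := (M - 4 * Real.log M) / Real.log 2 with hxdef
  have hy0 : M / 2 ≤ M - 4 * Real.log M := by linarith
  have hx1 : 1 ≤ x := by
    rw [hxdef, le_div_iff₀ hl2]
    nlinarith [Real.log_two_lt_d9]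
  have hx0 : 0 ≤ x := by linarith
  set k : ℕ := ⌈x⌉₊ with hkdef
  have hk1 : 1 ≤ k := Nat.one_le_ceil_iff.mpr (by linarith)
  have hxk : x ≤ (k : ℝ) := Nat.le_ceil x
  have hkx : (k : ℝ) ≤ x + 1 := (Nat.ceil_lt_add_one hx0).le
  have hk0R : (0 : ℝ) < k := by exact_mod_cast hk1
  have hxl2 : x * Real.log 2 = M - 4 * Real.log M := div_mul_cancel₀ _ hl2.ne'
  clear_value L M x k
  intro n hn hnQ
  set τ := n.divisors.card with hτdef
  have hτ0 : 0 < τ := Finset.card_pos.mpr ⟨1, Nat.one_mem_divisors.mpr hn.ne'⟩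
  have hτR : (0 : ℝ) < τ := by exact_mod_cast hτ0
  -- from the nat lemma
  have hnat := tau_pow_le n k hn.ne' hk1
  rw [← hτdef] at hnat
  clear_value τ
  have hR : (τ : ℝ) ^ k ≤ ((k : ℝ) + 1) ^ (k * 2 ^ k) * n := by exact_mod_cast hnat
  have hcast0 : (0 : ℝ) < ((k : ℝ) + 1) ^ (k * 2 ^ k) * n := by positivity
  have hlog1 : Real.log ((τ : ℝ) ^ k) ≤ Real.log (((k : ℝ) + 1) ^ (k * 2 ^ k) * n) :=
    Real.log_le_log (by positivity) hR
  rw [Real.log_pow, Real.log_mul (by positivity) (by exact_mod_cast hn.ne'),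
    Real.log_pow] at hlog1
  push_cast at hlog1
  -- hlog1 : k * log τ ≤ k * 2^k * log (k+1) + log n
  have hlogn : Real.log n ≤ 2 * L := by
    have h := Real.log_le_log (by exact_mod_cast hn) hnQ
    rwa [Real.log_pow, Nat.cast_ofNat, ← hLdef] at h
  have hstep : Real.log τ ≤ 2 ^ k * Real.log ((k : ℝ) + 1) + 2 * L / k := by
    have h : (k : ℝ) * Real.log τ ≤
        (k : ℝ) * (2 ^ k * Real.log ((k : ℝ) + 1) + 2 * L / k) := by
      have he : (k : ℝ) * (2 ^ k * Real.log ((k : ℝ) + 1) + 2 * L / k) =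
          (k : ℝ) * 2 ^ k * Real.log ((k : ℝ) + 1) + 2 * L := by
        field_simp
      rw [he]
      linarith [hlog1, hlogn]
    exact le_of_mul_le_mul_left h hk0R
  -- Bound A : 2 * L / k ≤ (2 log 2 + ε/2) * (L / M)
  have hG3 : 2 * Real.log 2 * M ≤ (2 * Real.log 2 + ε / 2) * (M - 4 * Real.log M) := by
    have h4 : 4 * (2 * Real.log 2 + ε / 2) * Real.log M ≤ (ε / 2) * M := by
      have := mul_le_mul_of_nonneg_left hMc₁ (by positivity :
        (0 : ℝ) ≤ 4 * (2 * Real.log 2 + ε / 2))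
      calc 4 * (2 * Real.log 2 + ε / 2) * Real.log M
          ≤ 4 * (2 * Real.log 2 + ε / 2) * (c₁ * M) := this
        _ = (ε / 2) * M := by
            rw [hc₁def]; field_simp
    nlinarith
  have hA2 : 2 * L / k ≤ (2 * Real.log 2 + ε / 2) * (L / M) := by
    have h1 : 2 * M ≤ (2 * Real.log 2 + ε / 2) * k := by
      have h2 : (2 * Real.log 2 + ε / 2) * x * Real.log 2 ≥ 2 * Real.log 2 * M := by
        calc (2 * Real.log 2 + ε / 2) * x * Real.log 2
            = (2 * Real.log 2 + ε / 2) * (M - 4 * Real.log M) := by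
              rw [mul_assoc, hxl2]
          _ ≥ 2 * Real.log 2 * M := hG3
      have h3 : 2 * M * Real.log 2 ≤ (2 * Real.log 2 + ε / 2) * x * Real.log 2 := by
        nlinarith
      have h4 : 2 * M ≤ (2 * Real.log 2 + ε / 2) * x :=
        le_of_mul_le_mul_right (by nlinarith) hl2
      nlinarith
    rw [div_le_iff₀ hk0R]
    have hLM : 0 < L / M := by positivity
    calc 2 * L = (2 * M) * (L / M) := by field_simp
      _ ≤ ((2 * Real.log 2 + ε / 2) * k) * (L / M) :=
          mul_le_mul_of_nonneg_right h1 hLM.le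
      _ = (2 * Real.log 2 + ε / 2) * (L / M) * k := by ring
  -- Bound B : 2^k * log(k+1) ≤ (ε/2) * (L / M)
  have hM4pos : (0 : ℝ) < M ^ 4 := by positivity
  have h2k : (2 : ℝ) ^ k ≤ 2 * L / M ^ 4 := by
    have e1 : (2 : ℝ) ^ k = Real.exp ((k : ℝ) * Real.log 2) := by
      rw [Real.exp_nat_mul, Real.exp_log two_pos]
    rw [e1]
    have e2 : (k : ℝ) * Real.log 2 ≤ (x + 1) * Real.log 2 :=
      mul_le_mul_of_nonneg_right hkx hl2.le
    have e3 : (x + 1) * Real.log 2 = M + Real.log 2 - Real.log (M ^ 4) := by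
      rw [Real.log_pow]
      push_cast
      nlinarith [hxl2]
    calc Real.exp ((k : ℝ) * Real.log 2) ≤ Real.exp ((x + 1) * Real.log 2) :=
          Real.exp_le_exp.mpr e2
      _ = Real.exp M * 2 / M ^ 4 := by
          rw [e3, Real.exp_sub, Real.exp_add, Real.exp_log two_pos,
            Real.exp_log hM4pos]
      _ = 2 * L / M ^ 4 := by rw [hexpM]; ring
  have hlogk : Real.log ((k : ℝ) + 1) ≤ M := by
    have hx2M : x + 2 ≤ Real.exp M := by
      have hexpM2 : M / 2 + 1 ≤ Real.exp (M / 2) := Real.add_one_le_exp _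
      have hexpsq : Real.exp M = Real.exp (M / 2) * Real.exp (M / 2) := by
        rw [← Real.exp_add]; ring_nf
      have hxle : x ≤ 2 * M := by
        rw [hxdef, div_le_iff₀ hl2]
        nlinarith
      nlinarith [Real.exp_pos (M / 2)]
    have : (k : ℝ) + 1 ≤ Real.exp M := by linarith
    calc Real.log ((k : ℝ) + 1) ≤ Real.log (Real.exp M) :=
        Real.log_le_log (by positivity) this
      _ = M := Real.log_exp M
  have hlogk0 : 0 ≤ Real.log ((k : ℝ) + 1) := Real.log_nonneg (by push_cast; linarith)
  have hB : 2 ^ k * Real.log ((k : ℝ) + 1) ≤ (ε / 2) * (L / M) := by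
    have h1 : (2 : ℝ) ^ k * Real.log ((k : ℝ) + 1) ≤ (2 * L / M ^ 4) * M :=
      mul_le_mul h2k hlogk hlogk0 (by positivity)
    have h2 : (2 * L / M ^ 4) * M = 2 * L / M ^ 3 := by
      field_simp
    have h3 : 2 * L / M ^ 3 ≤ (ε / 2) * (L / M) := by
      rw [div_le_iff₀ (by positivity : (0:ℝ) < M ^ 3)]
      have h4 : 4 ≤ ε * M := by
        rw [div_le_iff₀ hε] at hMε
        nlinarith
      have : (ε / 2) * (L / M) * M ^ 3 = (ε * M) * (L * M) / 2 := by
        field_simp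
      rw [this]
      nlinarith [mul_pos hL0 hM0]
    calc (2:ℝ) ^ k * Real.log ((k : ℝ) + 1) ≤ (2 * L / M ^ 4) * M := h1
      _ = 2 * L / M ^ 3 := h2
      _ ≤ (ε / 2) * (L / M) := h3
  have htotal : Real.log τ ≤ (2 * Real.log 2 + ε) * (L / M) := by
    linarith [hstep, hA2, hB]
  calc (τ : ℝ) = Real.exp (Real.log τ) := (Real.exp_log hτR).symm
    _ ≤ Real.exp ((2 * Real.log 2 + ε) * (L / M)) := Real.exp_le_exp.mpr htotal


theorem stmt_4 :
    ∀ ε : ℝ, 0 < ε → ∃ Q₀ : ℝ, ∀ Q : ℝ, Q₀ ≤ Q →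
      ∀ A : Finset ℕ, (∀ a ∈ A, 0 < a ∧ (a : ℝ) ≤ Q) →
        (((A ×ˢ A ×ˢ A ×ˢ A).filter
            (fun q => q.1 * q.2.1 = q.2.2.1 * q.2.2.2)).card : ℝ) ≤
          (A.card : ℝ) ^ 2 *
            Real.exp ((2 * Real.log 2 + ε) *
              (Real.log Q / Real.log (Real.log Q))) := by
  intro ε hε
  obtain ⟨Q₀, hQ₀⟩ := Filter.eventually_atTop.mp (div_bound ε hε)
  refine ⟨max Q₀ 1, fun Q hQ A hA => ?_⟩
  have hQ1 : (1 : ℝ) ≤ Q := le_trans (le_max_right _ _) hQ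
  have hbound := hQ₀ Q (le_trans (le_max_left _ _) hQ)
  have hApos : ∀ a ∈ A, 0 < a := fun a ha => (hA a ha).1
  have hE := energy_le A hApos
  set C := Real.exp ((2 * Real.log 2 + ε) *
    (Real.log Q / Real.log (Real.log Q))) with hCdef
  calc (((A ×ˢ A ×ˢ A ×ˢ A).filter
          (fun q => q.1 * q.2.1 = q.2.2.1 * q.2.2.2)).card : ℝ)
      ≤ ((∑ p ∈ A ×ˢ A, (p.1 * p.2).divisors.card : ℕ) : ℝ) := by
        exact_mod_cast hE
    _ = ∑ p ∈ A ×ˢ A, ((p.1 * p.2).divisors.card : ℝ) := by push_cast; rfl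
    _ ≤ ∑ p ∈ A ×ˢ A, C := by
        apply Finset.sum_le_sum
        intro p hp
        rw [Finset.mem_product] at hp
        have h1 := hA p.1 hp.1
        have h2 := hA p.2 hp.2
        apply hbound
        · exact Nat.mul_pos h1.1 h2.1
        · push_cast
          have ha0 : (0 : ℝ) ≤ (p.1 : ℝ) := by positivity
          have hQ0 : (0 : ℝ) ≤ Q := by linarith
          calc ((p.1 : ℝ)) * (p.2 : ℝ) ≤ Q * Q :=
              mul_le_mul h1.2 h2.2 (by positivity) hQ0
            _ = Q ^ 2 := by ring
    _ = ((A ×ˢ A).card : ℝ) * C := by rw [Finset.sum_const, nsmul_eq_mul]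
    _ = (A.card : ℝ) ^ 2 * C := by rw [Finset.card_product]; push_cast; ring
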